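/- arXiv:2402.04834 — 2 statements merged into one kernel-verified Lean document; each statement's English description precedes it below -/
import Mathlib

section
/- Let T be a tensor network on graph G = (V,E) with converged BP messages, and let m̂_{u→v} be the messages rescaled so that Σ_{x_e} m̂_{u→v}(x_e)·m̂_{v→u}(x_e) = 1 for each edge e = (u,v). Then e^{-F_Bethe(T)} = ∏_{v∈V} Tr(T_v · ∏_{u∈N_v} m̂_{u→v}), i.e., the Bethe free-energy contraction estimate equals the product over vertices of the local star-network contractions with normalized incoming messages. -/
open Finset

variable {V : Type*} [Fintype V] [DecidableEq V] {D : ℕ}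

/-- Restriction of a global edge-variable assignment `x` to the edges incident to `v`,
viewed as an assignment of the bond variables of the tensor sitting at `v`. -/
def edgeRestrict (G : SimpleGraph V) [DecidableRel G.Adj]
    (x : ↥G.edgeFinset → Fin D) (v : V) : ↥(G.neighborFinset v) → Fin D :=
  fun u => x ⟨s(v, (u : V)), by
    rw [SimpleGraph.mem_edgeFinset, SimpleGraph.mem_edgeSet]
    exact (SimpleGraph.mem_neighborFinset G v (u : V)).mp u.2⟩

/-- The contraction value `Tr(𝒯)` of a tensor network `𝒯` on the graph `G`:
the sum, over all assignments of the bond variables (one variable of dimension `D`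
per edge), of the product of all tensor entries. -/
noncomputable def TNcontract (G : SimpleGraph V) [DecidableRel G.Adj]
    (T : ∀ v : V, (↥(G.neighborFinset v) → Fin D) → ℝ) : ℝ :=
  ∑ x : ↥G.edgeFinset → Fin D, ∏ v, T v (edgeRestrict G x v)

/-- One round of the BP message-update rule for tensor networks:
`m'_{v→u}(y) = Tr(T_v · ∏_{u' ∈ N_v \ {u}} m_{u'→v})`, the contraction of the tensor
at `v` with all incoming messages of the previous round except the one from `u`. -/
noncomputable def BPupdate (G : SimpleGraph V) [DecidableRel G.Adj]
    (T : ∀ v : V, (↥(G.neighborFinset v) → Fin D) → ℝ)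
    (m : V → V → Fin D → ℝ) : V → V → Fin D → ℝ :=
  fun v u y =>
    if hu : u ∈ G.neighborFinset v then
      ∑ z : ↥(G.neighborFinset v) → Fin D,
        if z ⟨u, hu⟩ = y then
          T v z * ∏ w : ↥(G.neighborFinset v),
            (if (w : V) = u then 1 else m (w : V) v (z w))
        else 0
    else 0

/-- The normalization constant `Z_e` of the edge marginal on the edge `(u,v)`. -/
noncomputable def Zedge (m : V → V → Fin D → ℝ) (u v : V) : ℝ :=
  ∑ y : Fin D, m u v y * m v u y

/-- The BP edge marginal `P_e(x_e) = m_{u→v}(x_e) m_{v→u}(x_e) / Z_e`. -/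
noncomputable def Pedge (m : V → V → Fin D → ℝ) (u v : V) (y : Fin D) : ℝ :=
  m u v y * m v u y / Zedge m u v

/-- The normalization constant `Z_v` of the vertex marginal at `v`; equivalently the
contraction `Tr(T_v · ∏_{u ∈ N_v} m_{u→v})` of `T_v` with all incoming messages. -/
noncomputable def Zvert (G : SimpleGraph V) [DecidableRel G.Adj]
    (T : ∀ v : V, (↥(G.neighborFinset v) → Fin D) → ℝ)
    (m : V → V → Fin D → ℝ) (v : V) : ℝ :=
  ∑ z : ↥(G.neighborFinset v) → Fin D, T v z * ∏ w : ↥(G.neighborFinset v), m (w : V) v (z w)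

/-- The BP vertex marginal `P_v(x_v) = T_v(x_v) ∏_{u ∈ N_v} m_{u→v}(x_e) / Z_v`. -/
noncomputable def Pvert (G : SimpleGraph V) [DecidableRel G.Adj]
    (T : ∀ v : V, (↥(G.neighborFinset v) → Fin D) → ℝ)
    (m : V → V → Fin D → ℝ) (v : V) (z : ↥(G.neighborFinset v) → Fin D) : ℝ :=
  (T v z * ∏ w : ↥(G.neighborFinset v), m (w : V) v (z w)) / Zvert G T m v

/-- The Bethe free energy
`F_Bethe = Σ_v Σ_{x_v} P_v ln(P_v / T_v) − Σ_e Σ_{x_e} P_e ln P_e`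
computed from the messages `m` (each edge `{u,v}` is counted once, whence the
factor `1/2` in front of the sum over ordered adjacent pairs). -/
noncomputable def FBethe (G : SimpleGraph V) [DecidableRel G.Adj]
    (T : ∀ v : V, (↥(G.neighborFinset v) → Fin D) → ℝ)
    (m : V → V → Fin D → ℝ) : ℝ :=
  (∑ v, ∑ z : ↥(G.neighborFinset v) → Fin D,
      Pvert G T m v z * Real.log (Pvert G T m v z / T v z))
  - (1 / 2) * ∑ v, ∑ u ∈ G.neighborFinset v, ∑ y : Fin D,
      Pedge m u v y * Real.log (Pedge m u v y)

section Aux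

variable (G : SimpleGraph V) [DecidableRel G.Adj]

lemma prodSplit (m : V → V → Fin D → ℝ) (v : V) (u0 : ↥(G.neighborFinset v))
    (z : ↥(G.neighborFinset v) → Fin D) :
    ∏ w : ↥(G.neighborFinset v), m (w : V) v (z w)
      = m (u0 : V) v (z u0) * ∏ w : ↥(G.neighborFinset v),
          (if (w : V) = (u0 : V) then 1 else m (w : V) v (z w)) := by
  classical
  rw [← Finset.mul_prod_erase univ
      (fun w : ↥(G.neighborFinset v) => m (w : V) v (z w)) (mem_univ u0)]
  congr 1
  rw [← Finset.mul_prod_erase univ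
      (fun w : ↥(G.neighborFinset v) => if (w : V) = (u0 : V) then 1 else m (w : V) v (z w))
      (mem_univ u0), if_pos rfl, one_mul]
  refine (Finset.prod_congr rfl fun w hw => ?_).symm
  rw [if_neg fun h => (Finset.mem_erase.mp hw).1 (Subtype.ext h)]

lemma marg (T : ∀ v : V, (↥(G.neighborFinset v) → Fin D) → ℝ)
    (m : V → V → Fin D → ℝ)
    (hfix : ∀ u v, G.Adj u v → ∀ y, BPupdate G T m v u y = m v u y)
    (v u : V) (hu : u ∈ G.neighborFinset v) (y : Fin D) :
    (∑ z : ↥(G.neighborFinset v) → Fin D,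
        if z ⟨u, hu⟩ = y then T v z * ∏ w : ↥(G.neighborFinset v), m (w : V) v (z w) else 0)
      = m u v y * m v u y := by
  have hadj : G.Adj u v := ((SimpleGraph.mem_neighborFinset G v u).mp hu).symm
  have key : ∀ z : ↥(G.neighborFinset v) → Fin D,
      (if z ⟨u, hu⟩ = y then T v z * ∏ w : ↥(G.neighborFinset v), m (w : V) v (z w) else 0)
      = m u v y * (if z ⟨u, hu⟩ = y then T v z *
          ∏ w : ↥(G.neighborFinset v), (if (w : V) = u then 1 else m (w : V) v (z w)) else 0) := by
    intro z
    by_cases h : z ⟨u, hu⟩ = y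
    · rw [if_pos h, if_pos h, prodSplit G m v ⟨u, hu⟩ z]
      simp only [h]
      ring
    · simp [h]
  rw [Finset.sum_congr rfl (fun z _ => key z), ← Finset.mul_sum]
  congr 1
  have := hfix u v hadj y
  rwa [BPupdate, dif_pos hu] at this

lemma ZvZe (T : ∀ v : V, (↥(G.neighborFinset v) → Fin D) → ℝ)
    (m : V → V → Fin D → ℝ)
    (hfix : ∀ u v, G.Adj u v → ∀ y, BPupdate G T m v u y = m v u y)
    (v u : V) (hu : u ∈ G.neighborFinset v) :
    Zvert G T m v = Zedge m u v := by
  have : Zvert G T m v = ∑ y : Fin D, ∑ z : ↥(G.neighborFinset v) → Fin D,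
      if z ⟨u, hu⟩ = y then T v z * ∏ w : ↥(G.neighborFinset v), m (w : V) v (z w) else 0 := by
    rw [Zvert, Finset.sum_comm]
    refine Finset.sum_congr rfl fun z _ => ?_
    simp
  rw [this, Zedge]
  exact Finset.sum_congr rfl fun y _ => marg G T m hfix v u hu y

lemma Zvert_pos (T : ∀ v : V, (↥(G.neighborFinset v) → Fin D) → ℝ)
    (m : V → V → Fin D → ℝ) (hT : ∀ v z, 0 < T v z)
    (hmpos : ∀ u v, G.Adj u v → ∀ y, 0 < m u v y)
    (hD : ∀ u v, G.Adj u v → 0 < D) (v : V) :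
    0 < Zvert G T m v := by
  haveI hne : Nonempty (↥(G.neighborFinset v) → Fin D) := by
    rcases isEmpty_or_nonempty ↥(G.neighborFinset v) with h | h
    · exact ⟨fun w => (h.false w).elim⟩
    · obtain ⟨w⟩ := h
      have hd : 0 < D := hD (w : V) v (((SimpleGraph.mem_neighborFinset G v w).mp w.2).symm)
      exact ⟨fun _ => ⟨0, hd⟩⟩
  rw [Zvert]
  refine Finset.sum_pos (fun z _ => ?_) Finset.univ_nonempty
  refine mul_pos (hT v z) (Finset.prod_pos fun w _ => ?_)
  exact hmpos (w : V) v (((SimpleGraph.mem_neighborFinset G v w).mp w.2).symm) _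

lemma Zedge_pos (m : V → V → Fin D → ℝ)
    (hmpos : ∀ u v, G.Adj u v → ∀ y, 0 < m u v y)
    (u v : V) (h : G.Adj u v) (hD : 0 < D) : 0 < Zedge m u v := by
  haveI : Nonempty (Fin D) := ⟨⟨0, hD⟩⟩
  rw [Zedge]
  exact Finset.sum_pos (fun y _ => mul_pos (hmpos u v h y) (hmpos v u h.symm y))
    Finset.univ_nonempty

lemma Pedge_sum (m : V → V → Fin D → ℝ)
    (hmpos : ∀ u v, G.Adj u v → ∀ y, 0 < m u v y)
    (u v : V) (h : G.Adj u v) (hD : 0 < D) : ∑ y : Fin D, Pedge m u v y = 1 := by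
  simp only [Pedge]
  rw [← Finset.sum_div, ← Zedge, div_self (Zedge_pos G m hmpos u v h hD).ne']

lemma Pedge_symm (m : V → V → Fin D → ℝ) (u v : V) (y : Fin D) :
    Pedge m u v y = Pedge m v u y := by
  rw [Pedge, Pedge, Zedge, Zedge, mul_comm (m u v y)]
  congr 1
  exact Finset.sum_congr rfl fun y _ => mul_comm _ _

lemma Pvert_sum (T : ∀ v : V, (↥(G.neighborFinset v) → Fin D) → ℝ)
    (m : V → V → Fin D → ℝ) (hT : ∀ v z, 0 < T v z)
    (hmpos : ∀ u v, G.Adj u v → ∀ y, 0 < m u v y)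
    (hD : ∀ u v, G.Adj u v → 0 < D) (v : V) :
    ∑ z : ↥(G.neighborFinset v) → Fin D, Pvert G T m v z = 1 := by
  simp only [Pvert]
  rw [← Finset.sum_div, ← Zvert, div_self (Zvert_pos G T m hT hmpos hD v).ne']

lemma margP (T : ∀ v : V, (↥(G.neighborFinset v) → Fin D) → ℝ)
    (m : V → V → Fin D → ℝ)
    (hfix : ∀ u v, G.Adj u v → ∀ y, BPupdate G T m v u y = m v u y)
    (v u : V) (hu : u ∈ G.neighborFinset v) (g : Fin D → ℝ) :
    ∑ z : ↥(G.neighborFinset v) → Fin D, Pvert G T m v z * g (z ⟨u, hu⟩)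
      = ∑ y : Fin D, Pedge m u v y * g y := by
  have hZ := ZvZe G T m hfix v u hu
  have key : ∑ z : ↥(G.neighborFinset v) → Fin D,
      (T v z * ∏ w : ↥(G.neighborFinset v), m (w : V) v (z w)) * g (z ⟨u, hu⟩)
      = ∑ y : Fin D, (m u v y * m v u y) * g y := by
    have h1 : ∀ z : ↥(G.neighborFinset v) → Fin D,
        (T v z * ∏ w : ↥(G.neighborFinset v), m (w : V) v (z w)) * g (z ⟨u, hu⟩)
        = ∑ y : Fin D, (if z ⟨u, hu⟩ = y then
            T v z * ∏ w : ↥(G.neighborFinset v), m (w : V) v (z w) else 0) * g y := by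
      intro z
      simp [ite_mul]
    rw [Finset.sum_congr rfl fun z _ => h1 z, Finset.sum_comm]
    refine Finset.sum_congr rfl fun y _ => ?_
    rw [← Finset.sum_mul, marg G T m hfix v u hu y]
  simp only [Pvert, Pedge, hZ]
  calc ∑ z : ↥(G.neighborFinset v) → Fin D,
      (T v z * ∏ w : ↥(G.neighborFinset v), m (w : V) v (z w)) / Zedge m u v * g (z ⟨u, hu⟩)
      = (∑ z : ↥(G.neighborFinset v) → Fin D,
          (T v z * ∏ w : ↥(G.neighborFinset v), m (w : V) v (z w)) * g (z ⟨u, hu⟩))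
            / Zedge m u v := by
        rw [Finset.sum_div]
        exact Finset.sum_congr rfl fun z _ => by ring
    _ = (∑ y : Fin D, (m u v y * m v u y) * g y) / Zedge m u v := by rw [key]
    _ = ∑ y : Fin D, m u v y * m v u y / Zedge m u v * g y := by
        rw [Finset.sum_div]
        exact Finset.sum_congr rfl fun y _ => by ring

lemma vertTerm (T : ∀ v : V, (↥(G.neighborFinset v) → Fin D) → ℝ)
    (m : V → V → Fin D → ℝ) (hT : ∀ v z, 0 < T v z)
    (hmpos : ∀ u v, G.Adj u v → ∀ y, 0 < m u v y)
    (hfix : ∀ u v, G.Adj u v → ∀ y, BPupdate G T m v u y = m v u y)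
    (hD : ∀ u v, G.Adj u v → 0 < D) (v : V) :
    ∑ z : ↥(G.neighborFinset v) → Fin D,
        Pvert G T m v z * Real.log (Pvert G T m v z / T v z)
      = (∑ u ∈ G.neighborFinset v, ∑ y : Fin D, Pedge m u v y * Real.log (m u v y))
        - Real.log (Zvert G T m v) := by
  have hZ := Zvert_pos G T m hT hmpos hD v
  have hmp : ∀ (w : ↥(G.neighborFinset v)) (y : Fin D), 0 < m (w : V) v y :=
    fun w => hmpos (w : V) v (((SimpleGraph.mem_neighborFinset G v w).mp w.2).symm)
  have hlog : ∀ z : ↥(G.neighborFinset v) → Fin D,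
      Real.log (Pvert G T m v z / T v z)
      = (∑ w : ↥(G.neighborFinset v), Real.log (m (w : V) v (z w)))
        - Real.log (Zvert G T m v) := by
    intro z
    have h1 : Pvert G T m v z / T v z
        = (∏ w : ↥(G.neighborFinset v), m (w : V) v (z w)) / Zvert G T m v := by
      rw [Pvert, div_div, mul_comm (Zvert G T m v) (T v z), ← div_div,
        mul_comm (T v z), mul_div_assoc, div_self (hT v z).ne', mul_one]
    rw [h1, Real.log_div (Finset.prod_pos fun w _ => hmp w (z w)).ne' hZ.ne',
      Real.log_prod fun w _ => (hmp w (z w)).ne']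
  calc ∑ z : ↥(G.neighborFinset v) → Fin D,
        Pvert G T m v z * Real.log (Pvert G T m v z / T v z)
      = ∑ z : ↥(G.neighborFinset v) → Fin D,
          ((∑ w : ↥(G.neighborFinset v), Pvert G T m v z * Real.log (m (w : V) v (z w)))
            - Pvert G T m v z * Real.log (Zvert G T m v)) := by
        refine Finset.sum_congr rfl fun z _ => ?_
        rw [hlog z, mul_sub, Finset.mul_sum]
    _ = (∑ w : ↥(G.neighborFinset v), ∑ z : ↥(G.neighborFinset v) → Fin D,
          Pvert G T m v z * Real.log (m (w : V) v (z w)))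
        - (∑ z : ↥(G.neighborFinset v) → Fin D, Pvert G T m v z)
            * Real.log (Zvert G T m v) := by
        rw [Finset.sum_sub_distrib, Finset.sum_comm, Finset.sum_mul]
    _ = (∑ w : ↥(G.neighborFinset v), ∑ y : Fin D,
          Pedge m (w : V) v y * Real.log (m (w : V) v y)) - Real.log (Zvert G T m v) := by
        rw [Pvert_sum G T m hT hmpos hD v, one_mul]
        congr 1
        refine Finset.sum_congr rfl fun w _ => ?_
        have := margP G T m hfix v (w : V) w.2 (fun y => Real.log (m (w : V) v y))
        simpa using this
    _ = (∑ u ∈ G.neighborFinset v, ∑ y : Fin D,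
          Pedge m u v y * Real.log (m u v y)) - Real.log (Zvert G T m v) := by
        rw [Finset.sum_coe_sort (G.neighborFinset v)
          (fun u => ∑ y : Fin D, Pedge m u v y * Real.log (m u v y))]

lemma edgeTerm (m : V → V → Fin D → ℝ)
    (hmpos : ∀ u v, G.Adj u v → ∀ y, 0 < m u v y)
    (u v : V) (h : G.Adj u v) (hD : 0 < D) :
    ∑ y : Fin D, Pedge m u v y * Real.log (Pedge m u v y)
      = (∑ y : Fin D, Pedge m u v y * Real.log (m u v y))
        + (∑ y : Fin D, Pedge m u v y * Real.log (m v u y))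
        - Real.log (Zedge m u v) := by
  have hZ := Zedge_pos G m hmpos u v h hD
  have hlog : ∀ y : Fin D, Real.log (Pedge m u v y)
      = Real.log (m u v y) + Real.log (m v u y) - Real.log (Zedge m u v) := by
    intro y
    rw [Pedge, Real.log_div (mul_pos (hmpos u v h y) (hmpos v u h.symm y)).ne' hZ.ne',
      Real.log_mul (hmpos u v h y).ne' (hmpos v u h.symm y).ne']
  calc ∑ y : Fin D, Pedge m u v y * Real.log (Pedge m u v y)
      = ∑ y : Fin D, (Pedge m u v y * Real.log (m u v y)
          + Pedge m u v y * Real.log (m v u y)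
          - Pedge m u v y * Real.log (Zedge m u v)) := by
        refine Finset.sum_congr rfl fun y _ => ?_
        rw [hlog y]; ring
    _ = (∑ y : Fin D, Pedge m u v y * Real.log (m u v y))
        + (∑ y : Fin D, Pedge m u v y * Real.log (m v u y))
        - (∑ y : Fin D, Pedge m u v y) * Real.log (Zedge m u v) := by
        rw [Finset.sum_sub_distrib, Finset.sum_add_distrib, Finset.sum_mul]
    _ = _ := by rw [Pedge_sum G m hmpos u v h hD, one_mul]

lemma nbrSwap (f : V → V → ℝ) :
    ∑ v, ∑ u ∈ G.neighborFinset v, f u v = ∑ v, ∑ u ∈ G.neighborFinset v, f v u := by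
  have h : ∀ (g : V → V → ℝ), ∑ v, ∑ u ∈ G.neighborFinset v, g u v
      = ∑ v : V, ∑ u : V, if G.Adj v u then g u v else 0 := by
    intro g
    refine Finset.sum_congr rfl fun v _ => ?_
    rw [SimpleGraph.neighborFinset_eq_filter, Finset.sum_filter]
  rw [h, h, Finset.sum_comm]
  refine Finset.sum_congr rfl fun v _ => Finset.sum_congr rfl fun u _ =>
    if_congr (G.adj_comm u v) rfl rfl

lemma nbrSwapProd (f : V → V → ℝ) :
    ∏ v, ∏ u ∈ G.neighborFinset v, f u v = ∏ v, ∏ u ∈ G.neighborFinset v, f v u := by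
  have h : ∀ (g : V → V → ℝ), ∏ v, ∏ u ∈ G.neighborFinset v, g u v
      = ∏ v : V, ∏ u : V, if G.Adj v u then g u v else 1 := by
    intro g
    refine Finset.prod_congr rfl fun v _ => ?_
    rw [SimpleGraph.neighborFinset_eq_filter, Finset.prod_filter]
  rw [h, h, Finset.prod_comm]
  refine Finset.prod_congr rfl fun v _ => Finset.prod_congr rfl fun u _ =>
    if_congr (G.adj_comm u v) rfl rfl

lemma FBethe_eq (T : ∀ v : V, (↥(G.neighborFinset v) → Fin D) → ℝ)
    (m : V → V → Fin D → ℝ) (hT : ∀ v z, 0 < T v z)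
    (hmpos : ∀ u v, G.Adj u v → ∀ y, 0 < m u v y)
    (hfix : ∀ u v, G.Adj u v → ∀ y, BPupdate G T m v u y = m v u y)
    (hD : ∀ u v, G.Adj u v → 0 < D) :
    FBethe G T m
      = (1 / 2) * (∑ v, ∑ u ∈ G.neighborFinset v, Real.log (Zedge m u v))
        - ∑ v, Real.log (Zvert G T m v) := by
  have hvert : (∑ v, ∑ z : ↥(G.neighborFinset v) → Fin D,
        Pvert G T m v z * Real.log (Pvert G T m v z / T v z))
      = (∑ v, ∑ u ∈ G.neighborFinset v, ∑ y : Fin D, Pedge m u v y * Real.log (m u v y))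
        - ∑ v, Real.log (Zvert G T m v) := by
    rw [← Finset.sum_sub_distrib]
    exact Finset.sum_congr rfl fun v _ => vertTerm G T m hT hmpos hfix hD v
  have hswap : ∑ v, ∑ u ∈ G.neighborFinset v, ∑ y : Fin D,
        Pedge m u v y * Real.log (m v u y)
      = ∑ v, ∑ u ∈ G.neighborFinset v, ∑ y : Fin D,
        Pedge m u v y * Real.log (m u v y) := by
    rw [nbrSwap G (fun a b => ∑ y : Fin D, Pedge m a b y * Real.log (m b a y))]
    refine Finset.sum_congr rfl fun v _ => Finset.sum_congr rfl fun u _ =>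
      Finset.sum_congr rfl fun y _ => ?_
    rw [Pedge_symm m v u y]
  have hedge : ∑ v, ∑ u ∈ G.neighborFinset v, ∑ y : Fin D,
        Pedge m u v y * Real.log (Pedge m u v y)
      = (∑ v, ∑ u ∈ G.neighborFinset v, ∑ y : Fin D, Pedge m u v y * Real.log (m u v y))
        + (∑ v, ∑ u ∈ G.neighborFinset v, ∑ y : Fin D, Pedge m u v y * Real.log (m u v y))
        - ∑ v, ∑ u ∈ G.neighborFinset v, Real.log (Zedge m u v) := by
    have step : ∑ v, ∑ u ∈ G.neighborFinset v, ∑ y : Fin D,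
          Pedge m u v y * Real.log (Pedge m u v y)
        = ∑ v, ∑ u ∈ G.neighborFinset v,
            ((∑ y : Fin D, Pedge m u v y * Real.log (m u v y))
              + (∑ y : Fin D, Pedge m u v y * Real.log (m v u y))
              - Real.log (Zedge m u v)) := by
      refine Finset.sum_congr rfl fun v _ => Finset.sum_congr rfl fun u hu => ?_
      have hadj : G.Adj u v := ((SimpleGraph.mem_neighborFinset G v u).mp hu).symm
      exact edgeTerm G m hmpos u v hadj (hD u v hadj)
    rw [step]
    simp only [Finset.sum_sub_distrib, Finset.sum_add_distrib]
    rw [hswap]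
  rw [FBethe, hvert, hedge]
  ring

end Aux

/-- **the key Lemma.** Let `𝒯` be a tensor network on `G = (V,E)` with
converged (fixed-point) BP messages `m`, and let `m̂` be the messages rescaled so that
`Σ_{x_e} m̂_{u→v}(x_e) m̂_{v→u}(x_e) = 1` on every edge `(u,v)`.  Then
`e^{-F_Bethe(𝒯)} = ∏_{v∈V} Tr(T_v · ∏_{u∈N_v} m̂_{u→v})`:
the Bethe free-energy estimate of the contraction equals the product over all vertices of
the local contraction of `T_v` with its normalized incoming messages. -/
theorem stmt12 {V : Type*} [Fintype V] [DecidableEq V] {D : ℕ}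
    (G : SimpleGraph V) [DecidableRel G.Adj]
    (T : ∀ v : V, (↥(G.neighborFinset v) → Fin D) → ℝ)
    (hT : ∀ v z, 0 < T v z)
    (m mhat : V → V → Fin D → ℝ)
    (hmpos : ∀ u v, G.Adj u v → ∀ y, 0 < m u v y)
    (hfix : ∀ u v, G.Adj u v → ∀ y, BPupdate G T m v u y = m v u y)
    (hscale : ∀ u v, G.Adj u v → ∃ c : ℝ, 0 < c ∧ ∀ y, mhat u v y = c * m u v y)
    (hnorm : ∀ u v, G.Adj u v → ∑ y : Fin D, mhat u v y * mhat v u y = 1) :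
    Real.exp (-(FBethe G T m)) = ∏ v, Zvert G T mhat v := by
  classical
  have hD : ∀ u v, G.Adj u v → 0 < D := by
    intro u v h
    rcases Nat.eq_zero_or_pos D with hd | hd
    · exfalso
      have h1 := hnorm u v h
      subst hd
      simpa using h1
    · exact hd
  choose c hc using hscale
  set c' : V → V → ℝ := fun u v => if h : G.Adj u v then c u v h else 1 with hc'
  have hc'pos : ∀ u v, 0 < c' u v := by
    intro u v
    rw [hc']
    dsimp only
    split
    · exact (hc u v _).1
    · norm_num
  have hmhat : ∀ u v, G.Adj u v → ∀ y, mhat u v y = c' u v * m u v y := by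
    intro u v h y
    rw [hc']
    dsimp only
    rw [dif_pos h]
    exact (hc u v h).2 y
  have hZv : ∀ v, 0 < Zvert G T m v := Zvert_pos G T m hT hmpos hD
  have hZe : ∀ u v, G.Adj u v → 0 < Zedge m u v :=
    fun u v h => Zedge_pos G m hmpos u v h (hD u v h)
  have hcc : ∀ u v, G.Adj u v → c' u v * c' v u = (Zedge m u v)⁻¹ := by
    intro u v h
    have h1 := hnorm u v h
    have h2 : ∑ y : Fin D, mhat u v y * mhat v u y
        = (c' u v * c' v u) * Zedge m u v := by
      rw [Zedge, Finset.mul_sum]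
      refine Finset.sum_congr rfl fun y _ => ?_
      rw [hmhat u v h y, hmhat v u h.symm y]
      ring
    rw [h2] at h1
    exact eq_inv_of_mul_eq_one_left (by linarith [h1])
  have hZmhat : ∀ v, Zvert G T mhat v
      = (∏ w : ↥(G.neighborFinset v), c' (w : V) v) * Zvert G T m v := by
    intro v
    rw [Zvert, Zvert, Finset.mul_sum]
    refine Finset.sum_congr rfl fun z _ => ?_
    have hprod : ∏ w : ↥(G.neighborFinset v), mhat (w : V) v (z w)
        = (∏ w : ↥(G.neighborFinset v), c' (w : V) v)
          * ∏ w : ↥(G.neighborFinset v), m (w : V) v (z w) := by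
      rw [← Finset.prod_mul_distrib]
      refine Finset.prod_congr rfl fun w _ => ?_
      exact hmhat (w : V) v (((SimpleGraph.mem_neighborFinset G v w).mp w.2).symm) (z w)
    rw [hprod]
    ring
  have hF := FBethe_eq G T m hT hmpos hfix hD
  set S := ∑ v, ∑ u ∈ G.neighborFinset v, Real.log (Zedge m u v) with hS
  have hmain : Real.exp (-(1 / 2 * S)) = ∏ v, ∏ w : ↥(G.neighborFinset v), c' (w : V) v := by
    have hL : (0 : ℝ) < ∏ v, ∏ w : ↥(G.neighborFinset v), c' (w : V) v :=
      Finset.prod_pos fun v _ => Finset.prod_pos fun w _ => hc'pos _ _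
    have hcoe : ∀ v, ∏ w : ↥(G.neighborFinset v), c' (w : V) v
        = ∏ u ∈ G.neighborFinset v, c' u v :=
      fun v => Finset.prod_coe_sort (G.neighborFinset v) (fun u => c' u v)
    have hsq1 : (∏ v, ∏ w : ↥(G.neighborFinset v), c' (w : V) v) ^ 2
        = ∏ v, ∏ u ∈ G.neighborFinset v, (Zedge m u v)⁻¹ := by
      rw [sq]
      calc (∏ v, ∏ w : ↥(G.neighborFinset v), c' (w : V) v)
            * ∏ v, ∏ w : ↥(G.neighborFinset v), c' (w : V) v
          = (∏ v, ∏ u ∈ G.neighborFinset v, c' u v)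
            * ∏ v, ∏ u ∈ G.neighborFinset v, c' v u := by
            rw [Finset.prod_congr rfl fun v _ => hcoe v,
              nbrSwapProd G (fun a b => c' a b)]
        _ = ∏ v, ∏ u ∈ G.neighborFinset v, (c' u v * c' v u) := by
            rw [← Finset.prod_mul_distrib]
            exact Finset.prod_congr rfl fun v _ => by rw [← Finset.prod_mul_distrib]
        _ = ∏ v, ∏ u ∈ G.neighborFinset v, (Zedge m u v)⁻¹ := by
            refine Finset.prod_congr rfl fun v _ => Finset.prod_congr rfl fun u hu => ?_
            exact hcc u v (((SimpleGraph.mem_neighborFinset G v u).mp hu).symm)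
    have hsq2 : (Real.exp (-(1 / 2 * S))) ^ 2
        = ∏ v, ∏ u ∈ G.neighborFinset v, (Zedge m u v)⁻¹ := by
      rw [sq, ← Real.exp_add]
      have : -(1 / 2 * S) + -(1 / 2 * S) = ∑ v, ∑ u ∈ G.neighborFinset v,
          (-Real.log (Zedge m u v)) := by
        rw [hS]
        simp only [Finset.sum_neg_distrib]
        ring
      rw [this, Real.exp_sum]
      refine Finset.prod_congr rfl fun v _ => ?_
      rw [Real.exp_sum]
      refine Finset.prod_congr rfl fun u hu => ?_
      rw [Real.exp_neg, Real.exp_log (hZe u v (((SimpleGraph.mem_neighborFinset G v u).mp hu).symm))]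
    have habs : |Real.exp (-(1 / 2 * S))|
        = |∏ v, ∏ w : ↥(G.neighborFinset v), c' (w : V) v| := by
      rw [← Real.sqrt_sq_eq_abs, ← Real.sqrt_sq_eq_abs, hsq1, hsq2]
    rwa [abs_of_pos (Real.exp_pos _), abs_of_pos hL] at habs
  calc Real.exp (-(FBethe G T m))
      = Real.exp (∑ v, Real.log (Zvert G T m v)) * Real.exp (-(1 / 2 * S)) := by
        rw [← Real.exp_add]
        congr 1
        rw [hF]
        ring
    _ = (∏ v, Zvert G T m v) * ∏ v, ∏ w : ↥(G.neighborFinset v), c' (w : V) v := by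
        rw [hmain, Real.exp_sum]
        congr 1
        exact Finset.prod_congr rfl fun v _ => Real.exp_log (hZv v)
    _ = ∏ v, Zvert G T mhat v := by
        rw [← Finset.prod_mul_distrib]
        exact (Finset.prod_congr rfl fun v _ => by rw [hZmhat v]; ring).symm
end

section
/- Summing the Bethe free-energies of the star networks over all vertices recovers the Bethe free-energy of the full tensor network: F_Bethe(T) = Σ_{v∈V} F_Bethe(T_v), where T_v is the star network at vertex v built from T_v and the normalized fixed-point incoming messages. -/
open Finset

variable {V : Type*} [Fintype V] [DecidableEq V] {D : ℕ}

/-- The star graph with center `none` and leaves `some i`, `i : ι`. -/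
def starGraph (ι : Type*) : SimpleGraph (Option ι) where
  Adj a b := (a = none ∧ b ≠ none) ∨ (b = none ∧ a ≠ none)
  symm := by tauto
  loopless := ⟨by rintro a (⟨h1, h2⟩ | ⟨h1, h2⟩) <;> exact h2 h1⟩

instance {ι : Type*} [DecidableEq ι] : DecidableRel (starGraph ι).Adj :=
  fun a b => inferInstanceAs (Decidable ((a = none ∧ b ≠ none) ∨ (b = none ∧ a ≠ none)))

/-- The star tensor network `𝒯_v`: a central tensor `Tc` surrounded by one-leg leaf
tensors `B i` sitting on its neighbors. -/
noncomputable def starT {ι : Type*} [DecidableEq ι] [Fintype ι] {D : ℕ}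
    (Tc : (ι → Fin D) → ℝ) (B : ι → Fin D → ℝ) :
    ∀ v : Option ι, (↥((starGraph ι).neighborFinset v) → Fin D) → ℝ :=
  fun v => match v with
  | none => fun z => Tc fun i => z ⟨some i, by
      rw [SimpleGraph.mem_neighborFinset]; simp [starGraph]⟩
  | some i => fun z => B i (z ⟨none, by
      rw [SimpleGraph.mem_neighborFinset]; simp [starGraph]⟩)

/-- The messages on the star network induced by a set of messages `min` (leaf `i` → center)
and `mout` (center → leaf `i`); the value on non-adjacent pairs is irrelevant. -/
def starMsg {ι : Type*} {D : ℕ} (min mout : ι → Fin D → ℝ) :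
    Option ι → Option ι → Fin D → ℝ :=
  fun a b => match a, b with
  | some i, none => min i
  | none, some i => mout i
  | _, _ => fun _ => 1

section StarAux

variable {ι : Type*} [DecidableEq ι] [Fintype ι] {D : ℕ}

lemma mem_center_nbhd (i : ι) :
    (some i : Option ι) ∈ (starGraph ι).neighborFinset (none : Option ι) := by
  rw [SimpleGraph.mem_neighborFinset]; simp [starGraph]

lemma mem_leaf_nbhd (i : ι) :
    (none : Option ι) ∈ (starGraph ι).neighborFinset (some i) := by
  rw [SimpleGraph.mem_neighborFinset]; simp [starGraph]

lemma leaf_nbhd (i : ι) : (starGraph ι).neighborFinset (some i) = {none} := by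
  ext b
  cases b <;> simp only [SimpleGraph.mem_neighborFinset] <;> simp [starGraph]

lemma leaf_eq (i : ι) (w : ↥((starGraph ι).neighborFinset (some i))) :
    w = ⟨none, mem_leaf_nbhd i⟩ := by
  rcases w with ⟨b, hb⟩
  cases b with
  | none => rfl
  | some j => rw [SimpleGraph.mem_neighborFinset] at hb; simp [starGraph] at hb

noncomputable instance leafUnique (i : ι) :
    Unique ↥((starGraph ι).neighborFinset (some i)) :=
  ⟨⟨⟨none, mem_leaf_nbhd i⟩⟩, leaf_eq i⟩

noncomputable def eC : ι ≃ ↥((starGraph ι).neighborFinset (none : Option ι)) :=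
  Equiv.ofBijective (fun i => ⟨some i, mem_center_nbhd i⟩)
    ⟨fun a b h => by simpa using congrArg Subtype.val h, by
      rintro ⟨b, hb⟩
      cases b with
      | none => rw [SimpleGraph.mem_neighborFinset] at hb; simp [starGraph] at hb
      | some i => exact ⟨i, rfl⟩⟩

noncomputable def eqC (D : ℕ) :
    (↥((starGraph ι).neighborFinset (none : Option ι)) → Fin D) ≃ (ι → Fin D) :=
  Equiv.arrowCongr (eC (ι := ι)).symm (Equiv.refl _)

lemma eqC_apply (z : ↥((starGraph ι).neighborFinset (none : Option ι)) → Fin D) (i : ι) :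
    eqC D z i = z (eC i) := rfl

noncomputable def eqL (i : ι) (D : ℕ) :
    (↥((starGraph ι).neighborFinset (some i)) → Fin D) ≃ Fin D where
  toFun z := z ⟨none, mem_leaf_nbhd i⟩
  invFun y := fun _ => y
  left_inv z := by funext w; rw [leaf_eq i w]
  right_inv y := rfl

lemma star_Zvert_none (Tc : (ι → Fin D) → ℝ) (B mn mo : ι → Fin D → ℝ) :
    Zvert (starGraph ι) (starT Tc B) (starMsg mn mo) none
      = ∑ x : ι → Fin D, Tc x * ∏ i, mn i (x i) := by
  unfold Zvert
  refine Fintype.sum_equiv (eqC D) _ _ fun z => ?_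
  congr 1
  rw [← Equiv.prod_comp (eC (ι := ι))
    (fun w => starMsg mn mo (w : Option ι) none (z w))]
  rfl

lemma star_vterm_none (Tc : (ι → Fin D) → ℝ) (B mn mo : ι → Fin D → ℝ) :
    (∑ z : ↥((starGraph ι).neighborFinset (none : Option ι)) → Fin D,
        Pvert (starGraph ι) (starT Tc B) (starMsg mn mo) none z *
          Real.log (Pvert (starGraph ι) (starT Tc B) (starMsg mn mo) none z /
            starT Tc B none z))
      = ∑ x : ι → Fin D,
          ((Tc x * ∏ i, mn i (x i)) / ∑ x' : ι → Fin D, Tc x' * ∏ i, mn i (x' i)) *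
            Real.log (((Tc x * ∏ i, mn i (x i)) /
              ∑ x' : ι → Fin D, Tc x' * ∏ i, mn i (x' i)) / Tc x) := by
  refine Fintype.sum_equiv (eqC D) _ _ fun z => ?_
  have hP : Pvert (starGraph ι) (starT Tc B) (starMsg mn mo) none z
      = (Tc (eqC D z) * ∏ i, mn i (eqC D z i)) /
          ∑ x' : ι → Fin D, Tc x' * ∏ i, mn i (x' i) := by
    unfold Pvert
    rw [star_Zvert_none]
    congr 1
    congr 1
    rw [← Equiv.prod_comp (eC (ι := ι))
      (fun w => starMsg mn mo (w : Option ι) none (z w))]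
    rfl
  rw [hP]
  rfl

lemma star_Zvert_leaf (Tc : (ι → Fin D) → ℝ) (B mn mo : ι → Fin D → ℝ) (i : ι) :
    Zvert (starGraph ι) (starT Tc B) (starMsg mn mo) (some i)
      = ∑ y : Fin D, B i y * mo i y := by
  unfold Zvert
  refine Fintype.sum_equiv (eqL i D) _ _ fun z => ?_
  congr 1
  rw [Fintype.prod_unique (fun w : ↥((starGraph ι).neighborFinset (some i)) => starMsg mn mo (↑w) (some i) (z w))]
  rfl

lemma star_vterm_leaf (Tc : (ι → Fin D) → ℝ) (B mn mo : ι → Fin D → ℝ) (i : ι)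
    (hZ : ∑ y : Fin D, B i y * mo i y = 1) :
    (∑ z : ↥((starGraph ι).neighborFinset (some i)) → Fin D,
        Pvert (starGraph ι) (starT Tc B) (starMsg mn mo) (some i) z *
          Real.log (Pvert (starGraph ι) (starT Tc B) (starMsg mn mo) (some i) z /
            starT Tc B (some i) z))
      = ∑ y : Fin D, (B i y * mo i y) *
          Real.log ((B i y * mo i y) / B i y) := by
  refine Fintype.sum_equiv (eqL i D) _ _ fun z => ?_
  have hP : Pvert (starGraph ι) (starT Tc B) (starMsg mn mo) (some i) z
      = B i (eqL i D z) * mo i (eqL i D z) := by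
    unfold Pvert
    rw [star_Zvert_leaf (mn := mn), hZ, div_one]
    congr 1
    rw [Fintype.prod_unique (fun w : ↥((starGraph ι).neighborFinset (some i)) => starMsg mn mo (↑w) (some i) (z w))]
    rfl
  rw [hP]
  rfl

lemma star_Zedge_leaf_none (mn mo : ι → Fin D → ℝ) (i : ι) :
    Zedge (starMsg mn mo) (some i) none = ∑ y : Fin D, mn i y * mo i y := rfl

lemma star_Zedge_none_leaf (mn mo : ι → Fin D → ℝ) (i : ι) :
    Zedge (starMsg mn mo) none (some i) = ∑ y : Fin D, mn i y * mo i y := by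
  unfold Zedge
  exact Finset.sum_congr rfl fun y _ => mul_comm _ _

lemma star_Pedge_leaf_none (mn mo : ι → Fin D → ℝ) (i : ι)
    (hn : ∑ y : Fin D, mn i y * mo i y = 1) (y : Fin D) :
    Pedge (starMsg mn mo) (some i) none y = mn i y * mo i y := by
  unfold Pedge
  rw [star_Zedge_leaf_none, hn, div_one]
  rfl

lemma star_Pedge_none_leaf (mn mo : ι → Fin D → ℝ) (i : ι)
    (hn : ∑ y : Fin D, mn i y * mo i y = 1) (y : Fin D) :
    Pedge (starMsg mn mo) none (some i) y = mn i y * mo i y := by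
  unfold Pedge
  rw [star_Zedge_none_leaf (mn := mn), hn, div_one]
  exact mul_comm _ _

lemma sum_center_nbhd (g : Option ι → ℝ) :
    ∑ b ∈ (starGraph ι).neighborFinset (none : Option ι), g b = ∑ i : ι, g (some i) := by
  rw [← Finset.sum_coe_sort]
  rw [← Equiv.sum_comp (eC (ι := ι)) (fun w => g (w : Option ι))]
  rfl

lemma star_FBethe (Tc : (ι → Fin D) → ℝ) (mn mo : ι → Fin D → ℝ)
    (hmn : ∀ i y, 0 < mn i y) (hmo : ∀ i y, 0 < mo i y)
    (hn : ∀ i, ∑ y : Fin D, mn i y * mo i y = 1) :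
    FBethe (starGraph ι) (starT Tc mn) (starMsg mn mo)
      = (∑ x : ι → Fin D,
          ((Tc x * ∏ i, mn i (x i)) / ∑ x' : ι → Fin D, Tc x' * ∏ i, mn i (x' i)) *
            Real.log (((Tc x * ∏ i, mn i (x i)) /
              ∑ x' : ι → Fin D, Tc x' * ∏ i, mn i (x' i)) / Tc x))
        - ∑ i, ∑ y : Fin D, (mn i y * mo i y) * Real.log (mn i y) := by
  unfold FBethe
  rw [Fintype.sum_option, Fintype.sum_option]
  rw [star_vterm_none]
  have hVleaf : ∀ i : ι,
      (∑ z : ↥((starGraph ι).neighborFinset (some i)) → Fin D,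
        Pvert (starGraph ι) (starT Tc mn) (starMsg mn mo) (some i) z *
          Real.log (Pvert (starGraph ι) (starT Tc mn) (starMsg mn mo) (some i) z /
            starT Tc mn (some i) z))
      = ∑ y : Fin D, (mn i y * mo i y) * Real.log (mo i y) := by
    intro i
    rw [star_vterm_leaf Tc mn mn mo i (hn i)]
    refine Finset.sum_congr rfl fun y _ => ?_
    rw [mul_div_cancel_left₀ _ (hmn i y).ne']
  have hV : (∑ i : ι, ∑ z : ↥((starGraph ι).neighborFinset (some i)) → Fin D,
        Pvert (starGraph ι) (starT Tc mn) (starMsg mn mo) (some i) z *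
          Real.log (Pvert (starGraph ι) (starT Tc mn) (starMsg mn mo) (some i) z /
            starT Tc mn (some i) z))
      = ∑ i : ι, ∑ y : Fin D, (mn i y * mo i y) * Real.log (mo i y) :=
    Finset.sum_congr rfl fun i _ => hVleaf i
  rw [hV]
  have hEnone : (∑ b ∈ (starGraph ι).neighborFinset (none : Option ι), ∑ y : Fin D,
      Pedge (starMsg mn mo) b none y * Real.log (Pedge (starMsg mn mo) b none y))
      = ∑ i : ι, ∑ y : Fin D, (mn i y * mo i y) * Real.log (mn i y * mo i y) := by
    rw [sum_center_nbhd]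
    refine Finset.sum_congr rfl fun i _ => Finset.sum_congr rfl fun y _ => ?_
    rw [star_Pedge_leaf_none mn mo i (hn i)]
  have hE : (∑ i : ι, ∑ b ∈ (starGraph ι).neighborFinset (some i), ∑ y : Fin D,
      Pedge (starMsg mn mo) b (some i) y * Real.log (Pedge (starMsg mn mo) b (some i) y))
      = ∑ i : ι, ∑ y : Fin D, (mn i y * mo i y) * Real.log (mn i y * mo i y) := by
    refine Finset.sum_congr rfl fun i _ => ?_
    rw [leaf_nbhd, Finset.sum_singleton]
    refine Finset.sum_congr rfl fun y _ => ?_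
    rw [star_Pedge_none_leaf mn mo i (hn i)]
  rw [hEnone, hE]
  have key : (∑ i : ι, ∑ y : Fin D, (mn i y * mo i y) * Real.log (mo i y))
      - (∑ i : ι, ∑ y : Fin D, (mn i y * mo i y) * Real.log (mn i y * mo i y))
      = -∑ i : ι, ∑ y : Fin D, (mn i y * mo i y) * Real.log (mn i y) := by
    rw [← Finset.sum_sub_distrib, ← Finset.sum_neg_distrib]
    refine Finset.sum_congr rfl fun i _ => ?_
    rw [← Finset.sum_sub_distrib, ← Finset.sum_neg_distrib]
    refine Finset.sum_congr rfl fun y _ => ?_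
    rw [Real.log_mul (hmn i y).ne' (hmo i y).ne']
    ring
  linarith [key]

end StarAux
lemma sum_nbr_symm {V : Type*} [Fintype V] [DecidableEq V]
    (G : SimpleGraph V) [DecidableRel G.Adj] (f : V → V → ℝ) :
    ∑ v, ∑ u ∈ G.neighborFinset v, f v u = ∑ v, ∑ u ∈ G.neighborFinset v, f u v := by
  have h : ∀ g : V → V → ℝ, (∑ v, ∑ u ∈ G.neighborFinset v, g v u)
      = ∑ v : V, ∑ u : V, if G.Adj v u then g v u else 0 := by
    intro g
    refine Finset.sum_congr rfl fun v _ => ?_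
    rw [SimpleGraph.neighborFinset_eq_filter, Finset.sum_filter]
  rw [h, h, Finset.sum_comm]
  refine Finset.sum_congr rfl fun v _ => Finset.sum_congr rfl fun u _ => ?_
  by_cases hadj : G.Adj u v
  · rw [if_pos hadj, if_pos hadj.symm]
  · rw [if_neg hadj, if_neg fun h => hadj h.symm]
/-- Summing the Bethe free-energies of the star networks over all
vertices recovers the Bethe free-energy of the full tensor network:
`F_Bethe(𝒯) = Σ_{v∈V} F_Bethe(𝒯_v)`, where `𝒯_v` is the star network at vertex `v` built
from the tensor `T_v` and the normalized fixed-point incoming messages `m̂_{u→v}` (its own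
BP fixed point consists of the messages `m̂_{u→v}` into, and `m̂_{v→u}` out of, `v`). -/
theorem stmt16 {V : Type*} [Fintype V] [DecidableEq V] {D : ℕ}
    (G : SimpleGraph V) [DecidableRel G.Adj]
    (T : ∀ v : V, (↥(G.neighborFinset v) → Fin D) → ℝ)
    (hT : ∀ v z, 0 < T v z)
    (m mhat : V → V → Fin D → ℝ)
    (hmpos : ∀ u v, G.Adj u v → ∀ y, 0 < m u v y)
    (hfix : ∀ u v, G.Adj u v → ∀ y, BPupdate G T m v u y = m v u y)
    (hscale : ∀ u v, G.Adj u v → ∃ c : ℝ, 0 < c ∧ ∀ y, mhat u v y = c * m u v y)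
    (hnorm : ∀ u v, G.Adj u v → ∑ y : Fin D, mhat u v y * mhat v u y = 1) :
    FBethe G T mhat
      = ∑ v, FBethe (starGraph ↥(G.neighborFinset v))
          (starT (T v) fun u y => mhat (u : V) v y)
          (starMsg (fun u y => mhat (u : V) v y) (fun u y => mhat v (u : V) y)) := by
  have hmhat : ∀ u v, G.Adj u v → ∀ y, 0 < mhat u v y := by
    intro u v h y
    obtain ⟨c, hc, hce⟩ := hscale u v h
    rw [hce y]; exact mul_pos hc (hmpos u v h y)
  have hRHS : ∀ v : V,
      FBethe (starGraph ↥(G.neighborFinset v))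
          (starT (T v) fun u y => mhat (u : V) v y)
          (starMsg (fun u y => mhat (u : V) v y) (fun u y => mhat v (u : V) y))
      = (∑ z : ↥(G.neighborFinset v) → Fin D,
            Pvert G T mhat v z * Real.log (Pvert G T mhat v z / T v z))
        - ∑ u ∈ G.neighborFinset v, ∑ y : Fin D,
            (mhat u v y * mhat v u y) * Real.log (mhat u v y) := by
    intro v
    rw [star_FBethe (T v) _ _
        (fun i y => hmhat (↑i) v (G.adj_symm ((G.mem_neighborFinset v ↑i).mp i.2)) y)
        (fun i y => hmhat v (↑i) ((G.mem_neighborFinset v ↑i).mp i.2) y)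
        (fun i => hnorm (↑i) v (G.adj_symm ((G.mem_neighborFinset v ↑i).mp i.2)))]
    congr 1
    · exact Finset.sum_coe_sort (G.neighborFinset v)
        (fun u => ∑ y : Fin D, (mhat u v y * mhat v u y) * Real.log (mhat u v y))
  have h2 : (∑ v, FBethe (starGraph ↥(G.neighborFinset v))
          (starT (T v) fun u y => mhat (u : V) v y)
          (starMsg (fun u y => mhat (u : V) v y) (fun u y => mhat v (u : V) y)))
      = (∑ v, ∑ z : ↥(G.neighborFinset v) → Fin D,
            Pvert G T mhat v z * Real.log (Pvert G T mhat v z / T v z))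
        - ∑ v, ∑ u ∈ G.neighborFinset v, ∑ y : Fin D,
            (mhat u v y * mhat v u y) * Real.log (mhat u v y) := by
    rw [← Finset.sum_sub_distrib]
    exact Finset.sum_congr rfl fun v _ => hRHS v
  rw [h2]
  unfold FBethe
  have e1 : (∑ v, ∑ u ∈ G.neighborFinset v, ∑ y : Fin D,
        Pedge mhat u v y * Real.log (Pedge mhat u v y))
      = (∑ v, ∑ u ∈ G.neighborFinset v, ∑ y : Fin D,
          (mhat u v y * mhat v u y) * Real.log (mhat u v y))
        + (∑ v, ∑ u ∈ G.neighborFinset v, ∑ y : Fin D,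
          (mhat u v y * mhat v u y) * Real.log (mhat v u y)) := by
    rw [← Finset.sum_add_distrib]
    refine Finset.sum_congr rfl fun v _ => ?_
    rw [← Finset.sum_add_distrib]
    refine Finset.sum_congr rfl fun u hu => ?_
    rw [← Finset.sum_add_distrib]
    refine Finset.sum_congr rfl fun y _ => ?_
    have hadj : G.Adj u v := G.adj_symm ((G.mem_neighborFinset v u).mp hu)
    have h1 : (0:ℝ) < mhat u v y := hmhat u v hadj y
    have h2 : (0:ℝ) < mhat v u y := hmhat v u hadj.symm y
    unfold Pedge Zedge
    rw [hnorm u v hadj, div_one, Real.log_mul h1.ne' h2.ne']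
    ring
  have e2 : (∑ v, ∑ u ∈ G.neighborFinset v, ∑ y : Fin D,
          (mhat u v y * mhat v u y) * Real.log (mhat v u y))
      = ∑ v, ∑ u ∈ G.neighborFinset v, ∑ y : Fin D,
          (mhat u v y * mhat v u y) * Real.log (mhat u v y) := by
    refine (sum_nbr_symm G (fun a b => ∑ y : Fin D,
        (mhat b a y * mhat a b y) * Real.log (mhat a b y))).trans ?_
    refine Finset.sum_congr rfl fun v _ => Finset.sum_congr rfl fun u _ =>
      Finset.sum_congr rfl fun y _ => ?_
    ring
  linarith [e1, e2]
end
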